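/- Abstract propositional Herbrand theorem: Let `atom` be a countable type (with decidable equality) and `index` a countable type, and let `Th : index → compound` where compounds are Boolean combinations of atoms. If for every total valuation `val : atom → Bool` there exists `i : index` such that `Th i` evaluates to false under `val`, then there exists a finite binary tree `t` with internal nodes labeled by atoms and leaves labeled by indices such that for every leaf, the compound at that leaf evaluates to `some false` under the partial valuation determined by the path from the root to the leaf. -/

import Mathlib

inductive Compound (atom : Type) : Type where
  | Atomic : atom → Compound atom
  | And : Compound atom → Compound atom → Compound atom
  | Or : Compound atom → Compound atom → Compound atom
  | Not : Compound atom → Compound atom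

variable {atom index : Type}

/-- Total Boolean evaluation of a compound. -/
def cEval (val : atom → Bool) : Compound atom → Bool
  | .Atomic a => val a
  | .And c d => cEval val c && cEval val d
  | .Or c d => cEval val c || cEval val d
  | .Not c => !cEval val c

/-- A path is a finite partial Boolean valuation on atoms. -/
abbrev PPath (atom : Type) : Type := List (atom × Bool)

/-- Lookup of an atom in a path. -/
def findA [DecidableEq atom] (p : PPath atom) (a : atom) : Option Bool :=
  (p.find? (fun x => x.1 = a)).map Prod.snd

/-- Strict partial evaluation of a compound under a path. -/
def pEval [DecidableEq atom] (p : PPath atom) : Compound atom → Option Bool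
  | .Atomic a => findA p a
  | .And c d =>
      match pEval p c, pEval p d with
      | some x, some y => some (x && y)
      | _, _ => none
  | .Or c d =>
      match pEval p c, pEval p d with
      | some x, some y => some (x || y)
      | _, _ => none
  | .Not c => (pEval p c).map (fun b => !b)

/-- The list of atoms occurring in a compound. -/
def atomsOf : Compound atom → List atom
  | .Atomic a => [a]
  | .And c d => atomsOf c ++ atomsOf d
  | .Or c d => atomsOf c ++ atomsOf d
  | .Not c => atomsOf c

/-- Herbrand trees: leaves carry indices, nodes carry atoms. -/
inductive HTree (atom index : Type) : Type where
  | Contrad : index → HTree atom index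
  | Exp : atom → HTree atom index → HTree atom index → HTree atom index

/-- Checker that `t` is a correct Herbrand tree relative to a starting path `p`. -/
def HtreeAt [DecidableEq atom] (Th : index → Compound atom) (p : PPath atom) :
    HTree atom index → Bool
  | .Contrad i => pEval p (Th i) == some false
  | .Exp a t₁ t₂ =>
      (findA p a == none) && HtreeAt Th ((a, true) :: p) t₁
        && HtreeAt Th ((a, false) :: p) t₂

/-- Checker that `t` is a Herbrand tree for the theory `Th`. -/
def Htree [DecidableEq atom] (Th : index → Compound atom) (t : HTree atom index) : Bool :=
  HtreeAt Th [] t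

/-- `q` extends `p` as a partial valuation. -/
def PathExtends [DecidableEq atom] (q p : PPath atom) : Prop :=
  ∀ a b, findA p a = some b → findA q a = some b

/-- A total valuation `val` extends the path `p`. -/
def ValExtends [DecidableEq atom] (val : atom → Bool) (p : PPath atom) : Prop :=
  ∀ a b, findA p a = some b → val a = b

/-- The `good` predicate: reflects the existence of a Herbrand sub-tree below `p`. -/
inductive good [DecidableEq atom] (Th : index → Compound atom) : PPath atom → Prop where
  | good_leaf : ∀ p i, pEval p (Th i) = some false → good Th p
  | good_node : ∀ p a, findA p a = none → good Th ((a, true) :: p) →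
      good Th ((a, false) :: p) → good Th p

section Aux

open Classical in
lemma findA_cons [DecidableEq atom] (x a : atom) (b : Bool) (p : PPath atom) :
    findA ((x, b) :: p) a = if x = a then some b else findA p a := by
  by_cases h : x = a <;> simp [findA, List.find?_cons, h]

lemma good_tree [DecidableEq atom] (Th : index → Compound atom) (p : PPath atom)
    (h : good Th p) : ∃ t : HTree atom index, HtreeAt Th p t = true := by
  induction h with
  | good_leaf p i hp => exact ⟨.Contrad i, by simp [HtreeAt, hp]⟩
  | good_node p a ha _ _ ih1 ih2 =>
      obtain ⟨t1, h1⟩ := ih1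
      obtain ⟨t2, h2⟩ := ih2
      exact ⟨.Exp a t1 t2, by simp [HtreeAt, ha, h1, h2]⟩

lemma pEval_some [DecidableEq atom] (p : PPath atom) (val : atom → Bool)
    (c : Compound atom) (h : ∀ a ∈ atomsOf c, findA p a = some (val a)) :
    pEval p c = some (cEval val c) := by
  induction c with
  | Atomic a => simpa [pEval, cEval] using h a (by simp [atomsOf])
  | And c d ihc ihd =>
      rw [pEval, ihc (fun a ha => h a (by simp [atomsOf, ha])),
        ihd (fun a ha => h a (by simp [atomsOf, ha]))]
      rfl
  | Or c d ihc ihd =>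
      rw [pEval, ihc (fun a ha => h a (by simp [atomsOf, ha])),
        ihd (fun a ha => h a (by simp [atomsOf, ha]))]
      rfl
  | Not c ihc =>
      rw [pEval, ihc (fun a ha => h a (by simp [atomsOf, ha]))]
      rfl

open Classical in
/-- The sequence of paths built while refuting goodness. -/
noncomputable def seqP [DecidableEq atom] (Th : index → Compound atom) (f : ℕ → atom) :
    ℕ → PPath atom
  | 0 => []
  | n + 1 =>
      let p := seqP Th f n
      if findA p (f n) = none then
        if good Th ((f n, true) :: p) then (f n, false) :: p else (f n, true) :: p
      else p

lemma seqP_not_good [DecidableEq atom] (Th : index → Compound atom) (f : ℕ → atom)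
    (h0 : ¬ good Th ([] : PPath atom)) : ∀ n, ¬ good Th (seqP Th f n) := by
  intro n
  induction n with
  | zero => exact h0
  | succ n ih =>
      rw [seqP]
      split
      · next hfn =>
        split
        · next hg =>
          intro hbad
          exact ih (good.good_node _ _ hfn hg hbad)
        · next hg => exact hg
      · exact ih

lemma seqP_mono [DecidableEq atom] (Th : index → Compound atom) (f : ℕ → atom)
    (n : ℕ) (a : atom) (b : Bool) (h : findA (seqP Th f n) a = some b) :
    findA (seqP Th f (n + 1)) a = some b := by
  rw [seqP]
  split
  · next hfn =>
    have hne : f n ≠ a := fun he => by rw [he, h] at hfn; exact Option.some_ne_none _ hfn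
    split <;> rw [findA_cons, if_neg hne] <;> exact h
  · exact h

lemma seqP_mono' [DecidableEq atom] (Th : index → Compound atom) (f : ℕ → atom)
    {n m : ℕ} (hnm : n ≤ m) (a : atom) (b : Bool) (h : findA (seqP Th f n) a = some b) :
    findA (seqP Th f m) a = some b := by
  induction m with
  | zero => have : n = 0 := Nat.le_zero.mp hnm; subst this; exact h
  | succ m ih =>
      rcases Nat.lt_or_ge n (m + 1) with h' | h'
      · exact seqP_mono Th f m a b (ih (Nat.lt_succ_iff.mp h'))
      · have : n = m + 1 := le_antisymm hnm h'
        rw [← this]; exact h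

lemma seqP_assigned [DecidableEq atom] (Th : index → Compound atom) (f : ℕ → atom)
    (n : ℕ) : (findA (seqP Th f (n + 1)) (f n)).isSome := by
  rw [seqP]
  split
  · split <;> simp [findA_cons]
  · next h => exact Option.isSome_iff_ne_none.mpr h

lemma le_foldr_max : ∀ (l : List ℕ), ∀ x ∈ l, x ≤ l.foldr max 0 := by
  intro l
  induction l with
  | nil => simp
  | cons y l ih =>
      intro x hx
      rcases List.mem_cons.mp hx with h | h
      · subst h; exact le_max_left _ _
      · exact le_trans (ih x h) (le_max_right _ _)

end Aux

/-- abstract propositional Herbrand theorem. -/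
theorem herbrand_bool {atom index : Type} [DecidableEq atom] [Countable atom]
    [Countable index] (Th : index → Compound atom)
    (hU : ∀ val : atom → Bool, ∃ i : index, cEval val (Th i) = false) :
    ∃ t : HTree atom index, Htree Th t = true := by
  suffices hg : good Th ([] : PPath atom) by
    obtain ⟨t, ht⟩ := good_tree Th [] hg
    exact ⟨t, ht⟩
  by_cases hne : Nonempty atom
  · by_contra h0
    haveI := hne
    obtain ⟨f, hf⟩ := exists_surjective_nat atom
    let ka : atom → ℕ := fun a => Classical.choose (hf a)
    have hka : ∀ a, f (ka a) = a := fun a => Classical.choose_spec (hf a)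
    let val : atom → Bool := fun a => (findA (seqP Th f (ka a + 1)) a).getD true
    have hval : ∀ a, findA (seqP Th f (ka a + 1)) a = some (val a) := by
      intro a
      have h1 := seqP_assigned Th f (ka a)
      rw [hka a] at h1
      obtain ⟨b, hb⟩ := Option.isSome_iff_exists.mp h1
      simp [val, hb]
    obtain ⟨i, hi⟩ := hU val
    set N := ((atomsOf (Th i)).map (fun a => ka a + 1)).foldr max 0 with hN
    have hall : ∀ a ∈ atomsOf (Th i), findA (seqP Th f N) a = some (val a) := by
      intro a ha
      apply seqP_mono' Th f _ a (val a) (hval a)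
      exact le_foldr_max _ _ (List.mem_map.mpr ⟨a, ha, rfl⟩)
    have hpe := pEval_some (seqP Th f N) val (Th i) hall
    rw [hi] at hpe
    exact seqP_not_good Th f h0 N (good.good_leaf _ i hpe)
  · have hie : IsEmpty atom := not_nonempty_iff.mp hne
    obtain ⟨i, hi⟩ := hU (fun a => hie.elim a)
    refine good.good_leaf [] i ?_
    rw [pEval_some [] _ _ (fun a ha => hie.elim a), hi]
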